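/- Let 0 < q < 1, t ∈ ℝ, and let B_{t,V} be the 2×2 matrix ((i t q^{-1}, −q^{-1/2}), (q^{-1/2}, i t q)) (the action of B_t = F − q^{-2}EK^{-1} + itK^{-1} on the fundamental representation of U_q(sl_2)). If a 2×2 complex matrix C of the form ((a, b), (c, 0)) with bc = −q^{-1} commutes with B_{t,V}, then C = ± ((i t (q^{-1} − q), −q^{-1/2}), (q^{-1/2}, 0)). Moreover, the singular values of this C are q^{λ − 1/2} and q^{−λ − 1/2}, where λ ∈ ℝ is the unique real number with t = q^{-1/2} (q^{-λ} − q^{λ})/(q^{-1} − q). -/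

import Mathlib

open Matrix

private lemma aux_exists_unique (q : ℝ) (hq0 : 0 < q) (hq1 : q < 1) (t : ℝ) :
    (∃! l : ℝ, t = q ^ (-(1/2 : ℝ)) * (q ^ (-l) - q ^ l) / (q⁻¹ - q)) := by
  have hd : (0:ℝ) < q⁻¹ - q := by
    rw [sub_pos, ← one_div, lt_div_iff₀ hq0]; nlinarith
  have hsR : (0:ℝ) < q ^ (-(1/2 : ℝ)) := Real.rpow_pos_of_pos hq0 _
  have hq2 : 1 - q*q ≠ 0 := by nlinarith
  have hs' : q ^ (-(1/2:ℝ)) ≠ 0 := ne_of_gt hsR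
  have hlogq : Real.log q ≠ 0 := by
    have := Real.log_neg hq0 hq1; linarith
  set T : ℝ := t * (q⁻¹ - q) / q ^ (-(1/2 : ℝ)) with hT
  set u : ℝ := (T + Real.sqrt (T^2 + 4)) / 2 with hu
  have hsqrt : Real.sqrt (T^2+4) ^ 2 = T^2 + 4 := Real.sq_sqrt (by positivity)
  have hTlt : -T < Real.sqrt (T^2+4) := by
    nlinarith [Real.sqrt_nonneg (T^2+4), abs_nonneg T, sq_abs T]
  have hupos : 0 < u := by rw [hu]; nlinarith
  have hune : u ≠ 0 := ne_of_gt hupos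
  have huT : u - u⁻¹ = T := by
    field_simp
    linear_combination (u + (T + Real.sqrt (T^2+4))/2 - T) * hu + hsqrt/4
  have h1 : q ^ (-(-Real.log u / Real.log q)) = u := by
    rw [Real.rpow_def_of_pos hq0]
    rw [show Real.log q * -(-Real.log u/Real.log q) = Real.log u by field_simp]
    exact Real.exp_log hupos
  have h2 : q ^ (-Real.log u / Real.log q) = u⁻¹ := by
    rw [Real.rpow_def_of_pos hq0]
    rw [show Real.log q * (-Real.log u/Real.log q) = -Real.log u by field_simp]
    rw [Real.exp_neg, Real.exp_log hupos]
  refine ⟨-Real.log u/Real.log q, ?_, ?_⟩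
  · show t = _
    rw [h1, h2, huT, hT]
    field_simp [hq2, hs']
    linear_combination (-t) * mul_inv_cancel₀ (show (1:ℝ) - q^2 ≠ 0 by nlinarith)
  · intro y hy
    have hmono : StrictMono (fun l : ℝ => q ^ (-l) - q ^ l) := by
      intro x y hxy
      have h1 : q ^ (-x) < q ^ (-y) := Real.rpow_lt_rpow_of_exponent_gt hq0 hq1 (by linarith)
      have h2 : q ^ y < q ^ x := Real.rpow_lt_rpow_of_exponent_gt hq0 hq1 hxy
      simp only
      linarith
    apply hmono.injective
    simp only
    rw [h1, h2, huT, hT, hy]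
    field_simp [hq2, hs']
    rw [mul_div_assoc, div_self (show (1:ℝ) - q^2 ≠ 0 by nlinarith), mul_one]

private lemma aux_spectrum (q : ℝ) (hq0 : 0 < q) (hq1 : q < 1) (t : ℝ) (l : ℝ)
    (ht : t = q ^ (-(1/2 : ℝ)) * (q ^ (-l) - q ^ l) / (q⁻¹ - q))
    (C : Matrix (Fin 2) (Fin 2) ℂ)
    (hC : C = !![Complex.I * t * ((q : ℂ)⁻¹ - (q : ℂ)), -((q ^ (-(1/2 : ℝ)) : ℝ) : ℂ);
            ((q ^ (-(1/2 : ℝ)) : ℝ) : ℂ), 0]) :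
    spectrum ℂ (C.conjTranspose * C) =
        {((q ^ (2 * l - 1) : ℝ) : ℂ), ((q ^ (-(2 * l) - 1) : ℝ) : ℂ)} := by
  have hd : (0:ℝ) < q⁻¹ - q := by
    rw [sub_pos, ← one_div, lt_div_iff₀ hq0]; nlinarith
  set s : ℂ := ((q ^ (-(1/2 : ℝ)) : ℝ) : ℂ) with hs
  set dd : ℂ := ((q : ℂ)⁻¹ - (q : ℂ)) with hdd
  have hspos : (0:ℝ) < q ^ (-(1/2 : ℝ)) := Real.rpow_pos_of_pos hq0 _
  have hs2 : s * s = ((q:ℂ))⁻¹ := by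
    rw [hs, ← Complex.ofReal_mul, ← Real.rpow_add hq0]
    norm_num [Real.rpow_neg_one]
  set A : ℝ := q ^ (l : ℝ) with hA
  have hApos : (0:ℝ) < A := Real.rpow_pos_of_pos hq0 _
  have hAne : (A:ℂ) ≠ 0 := by exact_mod_cast ne_of_gt hApos
  have hqne : (q:ℂ) ≠ 0 := by exact_mod_cast ne_of_gt hq0
  have hAinv : q ^ (-l) = A⁻¹ := by rw [hA, Real.rpow_neg hq0.le]
  have hmu1 : (q ^ (2 * l - 1) : ℝ) = A * A / q := by
    rw [hA, Real.rpow_sub hq0, Real.rpow_one, two_mul, Real.rpow_add hq0]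
  have hmu2 : (q ^ (-(2 * l) - 1) : ℝ) = (A * A)⁻¹ / q := by
    rw [hA, Real.rpow_sub hq0, Real.rpow_one, Real.rpow_neg hq0.le, two_mul,
      Real.rpow_add hq0]
  have htd : (t : ℂ) * dd = s * ((A:ℂ)⁻¹ - (A:ℂ)) := by
    have : (t:ℝ) * (q⁻¹ - q) = q ^ (-(1/2:ℝ)) * (A⁻¹ - A) := by
      rw [ht, hAinv, div_mul_cancel₀ _ (ne_of_gt hd)]
    calc (t:ℂ) * dd = (((t * (q⁻¹ - q) : ℝ)) : ℂ) := by push_cast [hdd]; ring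
    _ = (((q ^ (-(1/2:ℝ)) * (A⁻¹ - A) : ℝ)) : ℂ) := by rw [this]
    _ = s * ((A:ℂ)⁻¹ - (A:ℂ)) := by push_cast [hs]; ring
  have hI : Complex.I * Complex.I = -1 := Complex.I_mul_I
  have hstars : (starRingEnd ℂ) s = s := by rw [hs, Complex.conj_ofReal]
  have hddc : (starRingEnd ℂ) dd = dd := by
    rw [hdd]; simp [map_sub, map_inv₀, Complex.conj_ofReal]
  have hstar : star (Complex.I * t * dd) = -(Complex.I * t * dd) := by
    rw [hdd, Complex.star_def]
    simp only [_root_.map_mul, map_sub, map_inv₀, Complex.conj_I, Complex.conj_ofReal]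
    ring
  have hM : C.conjTranspose * C =
      !![(t:ℂ)^2 * dd^2 + (q:ℂ)⁻¹, Complex.I * t * s * dd;
         -(Complex.I * t * s * dd), (q:ℂ)⁻¹] := by
    subst hC
    ext i j
    fin_cases i <;> fin_cases j <;>
      simp [Matrix.mul_apply, Fin.sum_univ_two, Matrix.conjTranspose_apply,
        hstars, hddc]
    · linear_combination (-(t:ℂ)^2*dd^2) * hI + hs2
    · ring
    · ring
    · exact hs2
  have hc1 : ((q ^ (2 * l - 1) : ℝ) : ℂ) = (A:ℂ)*(A:ℂ)*((q:ℂ))⁻¹ := by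
    rw [hmu1]; push_cast; ring
  have hc2 : ((q ^ (-(2 * l) - 1) : ℝ) : ℂ) = (A:ℂ)⁻¹*(A:ℂ)⁻¹*((q:ℂ))⁻¹ := by
    rw [hmu2]; push_cast [mul_inv]; ring
  have hA1 : (A:ℂ) * (A:ℂ)⁻¹ = 1 := mul_inv_cancel₀ hAne
  have hP : (t:ℂ)^2 * dd^2 = ((A:ℂ)*(A:ℂ) + (A:ℂ)⁻¹*(A:ℂ)⁻¹ - 2) * (q:ℂ)⁻¹ := by
    linear_combination ((t:ℂ)*dd + s*((A:ℂ)⁻¹ - (A:ℂ))) * htd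
      + ((A:ℂ)⁻¹ - (A:ℂ))^2 * hs2 - 2*(q:ℂ)⁻¹*hA1
  have hdet : ∀ x : ℂ, (x • (1:Matrix (Fin 2) (Fin 2) ℂ) - C.conjTranspose*C).det
      = (x - ((q ^ (2 * l - 1) : ℝ) : ℂ)) * (x - ((q ^ (-(2 * l) - 1) : ℝ) : ℂ)) := by
    intro x
    rw [hM, hc1, hc2]
    simp [Matrix.det_fin_two, Matrix.smul_apply, Matrix.one_apply]
    linear_combination ((t:ℂ)^2*s^2*dd^2) * hI + (-(t:ℂ)^2*dd^2) * hs2 + (-x) * hP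
      + (-(q:ℂ)⁻¹^2*((A:ℂ)*(A:ℂ)⁻¹+1)) * hA1
  ext x
  simp only [Set.mem_insert_iff, Set.mem_singleton_iff]
  rw [spectrum.mem_iff, Matrix.isUnit_iff_isUnit_det, Algebra.algebraMap_eq_smul_one,
    isUnit_iff_ne_zero, not_not, hdet x, mul_eq_zero, sub_eq_zero, sub_eq_zero]

/-- Let `0 < q < 1`, `t ∈ ℝ`, and let `B` be the action of
`B_t = F − q⁻²EK⁻¹ + itK⁻¹` on the fundamental representation of `U_q(sl₂)`, i.e.
`B = ((itq⁻¹, −q^{−1/2}), (q^{−1/2}, itq))`.  If a 2×2 complex matrix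
`C = ((a,b),(c,0))` with `bc = −q⁻¹` commutes with `B`, then
`C = ± ((it(q⁻¹−q), −q^{−1/2}), (q^{−1/2}, 0))`.  Moreover there is a unique `λ ∈ ℝ`
with `t = q^{−1/2}(q^{−λ} − q^{λ})/(q⁻¹ − q)`, and for it the singular values of `C`
are `q^{λ−1/2}` and `q^{−λ−1/2}` (i.e. the spectrum of `Cᴴ C` is
`{q^{2λ−1}, q^{−2λ−1}}`). -/
theorem rank_one_cylinder_matrix (q : ℝ) (hq0 : 0 < q) (hq1 : q < 1) (t : ℝ)
    (a b c : ℂ) (hbc : b * c = -(q : ℂ)⁻¹)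
    (C : Matrix (Fin 2) (Fin 2) ℂ) (hC : C = !![a, b; c, 0])
    (B : Matrix (Fin 2) (Fin 2) ℂ)
    (hB : B = !![Complex.I * t * (q : ℂ)⁻¹, -((q ^ (-(1/2 : ℝ)) : ℝ) : ℂ);
                 ((q ^ (-(1/2 : ℝ)) : ℝ) : ℂ), Complex.I * t * (q : ℂ)])
    (hcomm : C * B = B * C) :
    (C = !![Complex.I * t * ((q : ℂ)⁻¹ - (q : ℂ)), -((q ^ (-(1/2 : ℝ)) : ℝ) : ℂ);
            ((q ^ (-(1/2 : ℝ)) : ℝ) : ℂ), 0] ∨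
     C = -!![Complex.I * t * ((q : ℂ)⁻¹ - (q : ℂ)), -((q ^ (-(1/2 : ℝ)) : ℝ) : ℂ);
            ((q ^ (-(1/2 : ℝ)) : ℝ) : ℂ), 0]) ∧
    (∃! l : ℝ, t = q ^ (-(1/2 : ℝ)) * (q ^ (-l) - q ^ l) / (q⁻¹ - q)) ∧
    (∀ l : ℝ, t = q ^ (-(1/2 : ℝ)) * (q ^ (-l) - q ^ l) / (q⁻¹ - q) →
      spectrum ℂ (C.conjTranspose * C) =
        {((q ^ (2 * l - 1) : ℝ) : ℂ), ((q ^ (-(2 * l) - 1) : ℝ) : ℂ)}) := by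
  have hCeq : (C = !![Complex.I * t * ((q : ℂ)⁻¹ - (q : ℂ)), -((q ^ (-(1/2 : ℝ)) : ℝ) : ℂ);
            ((q ^ (-(1/2 : ℝ)) : ℝ) : ℂ), 0] ∨
     C = -!![Complex.I * t * ((q : ℂ)⁻¹ - (q : ℂ)), -((q ^ (-(1/2 : ℝ)) : ℝ) : ℂ);
            ((q ^ (-(1/2 : ℝ)) : ℝ) : ℂ), 0]) := by
    set s : ℂ := ((q ^ (-(1/2 : ℝ)) : ℝ) : ℂ) with hs
    have hspos : (0:ℝ) < q ^ (-(1/2 : ℝ)) := Real.rpow_pos_of_pos hq0 _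
    have hsne : s ≠ 0 := by
      simpa [hs, Complex.ofReal_ne_zero] using ne_of_gt hspos
    have hs2 : s * s = ((q:ℂ))⁻¹ := by
      rw [hs, ← Complex.ofReal_mul, ← Real.rpow_add hq0]
      norm_num [Real.rpow_neg_one]
    rw [hC, hB] at hcomm
    have h00 := congrFun (congrFun hcomm 0) 0
    have h01 := congrFun (congrFun hcomm 0) 1
    simp [Matrix.mul_apply, Fin.sum_univ_two] at h00 h01
    have hcb : c = -b := by
      have : c * s = -b * s := by linear_combination h00
      exact mul_right_cancel₀ hsne this
    have hb2 : (b - (-s)) * (b - s) = 0 := by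
      linear_combination -hbc - hs2 + b * hcb
    rcases mul_eq_zero.mp hb2 with h | h
    · have hb' : b = -s := by linear_combination h
      have hc' : c = s := by rw [hcb, hb']; ring
      have ha' : a = Complex.I * t * ((q:ℂ)⁻¹ - q) := by
        have : a * s = (Complex.I * t * ((q:ℂ)⁻¹ - q)) * s := by
          linear_combination -h01 + Complex.I * t * ((q:ℂ) - (q:ℂ)⁻¹) * hb'
        exact mul_right_cancel₀ hsne this
      left
      rw [hC, ha', hb', hc']
    · have hb' : b = s := by linear_combination h
      have hc' : c = -s := by rw [hcb, hb']
      have ha' : a = -(Complex.I * t * ((q:ℂ)⁻¹ - q)) := by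
        have : a * s = (-(Complex.I * t * ((q:ℂ)⁻¹ - q))) * s := by
          linear_combination -h01 + Complex.I * t * ((q:ℂ) - (q:ℂ)⁻¹) * hb'
        exact mul_right_cancel₀ hsne this
      right
      rw [hC, ha', hb', hc']
      ext i j
      fin_cases i <;> fin_cases j <;> simp
  refine ⟨hCeq, aux_exists_unique q hq0 hq1 t, ?_⟩
  intro l hl
  rcases hCeq with hC' | hC'
  · exact aux_spectrum q hq0 hq1 t l hl C hC'
  · have : C.conjTranspose * C =
        (!![Complex.I * t * ((q : ℂ)⁻¹ - (q : ℂ)), -((q ^ (-(1/2 : ℝ)) : ℝ) : ℂ);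
            ((q ^ (-(1/2 : ℝ)) : ℝ) : ℂ), 0] : Matrix (Fin 2) (Fin 2) ℂ).conjTranspose *
        !![Complex.I * t * ((q : ℂ)⁻¹ - (q : ℂ)), -((q ^ (-(1/2 : ℝ)) : ℝ) : ℂ);
            ((q ^ (-(1/2 : ℝ)) : ℝ) : ℂ), 0] := by
      rw [hC', Matrix.conjTranspose_neg, neg_mul_neg]
    rw [this]
    exact aux_spectrum q hq0 hq1 t l hl _ rfl
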